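/- Let φ : R → R' be a ring homomorphism of commutative rings such that 0 ∉ φ(S). Then φ(S) is a multiplicatively closed subset of R', and the induced map φ_S : Spec_{φ(S)} R' → Spec_S R sending P' to φ⁻¹(P') is continuous when Spec_{φ(S)} R' carries the φ(S)-flat topology and Spec_S R carries the S-flat topology; indeed, for every finitely generated ideal I of R, φ_S⁻¹(V_S(I)) = V_{φ(S)}(φ(I)R'). -/

import Mathlib

/-- An ideal `P` is `S`-prime if `P ∩ S = ∅` and there is `s ∈ S` such that
whenever `a * b ∈ P`, either `s * a ∈ P` or `s * b ∈ P`. -/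
def IsSPrime {R : Type*} [CommRing R] (S : Set R) (P : Ideal R) : Prop :=
  (P : Set R) ∩ S = ∅ ∧ ∃ s ∈ S, ∀ a b : R, a * b ∈ P → s * a ∈ P ∨ s * b ∈ P

/-- The `S`-prime spectrum `Spec_S R`: the set of all `S`-prime ideals of `R`. -/
def SSpec {R : Type*} [CommRing R] (S : Set R) : Type _ :=
  {P : Ideal R // IsSPrime S P}

/-- The `S`-variety of an ideal `I`:
`V_S(I) = {P ∈ Spec_S R | s • I ⊆ P for some s ∈ S}`. -/
def SVar {R : Type*} [CommRing R] (S : Set R) (I : Ideal R) : Set (SSpec S) :=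
  {P | ∃ s ∈ S, ∀ x ∈ I, s * x ∈ P.1}

/-- The `S`-radical of an ideal `I`:
`√[S](I) = {a ∈ R | s * a ^ n ∈ I for some s ∈ S, n ∈ ℕ}`. -/
def SRad {R : Type*} [CommRing R] (S : Set R) (I : Ideal R) : Set R :=
  {a | ∃ s ∈ S, ∃ n : ℕ, s * a ^ n ∈ I}

/-- The `S`-Zariski topology on `Spec_S R`: the closed sets are exactly the `V_S(I)`. -/
def sZariskiTop {R : Type*} [CommRing R] (S : Set R) : TopologicalSpace (SSpec S) :=
  TopologicalSpace.generateFrom {U | ∃ I : Ideal R, U = (SVar S I)ᶜ}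

/-- The `S`-flat topology on `Spec_S R`: the coarsest topology in which every
`V_S(f)`, `f ∈ R`, is open. -/
def sFlatTop {R : Type*} [CommRing R] (S : Set R) : TopologicalSpace (SSpec S) :=
  TopologicalSpace.generateFrom {U | ∃ f : R, U = SVar S (Ideal.span {f})}

/-- An ideal `I` is `S`-radically finite if `√[S](I) = √[S](J)` for some finitely
generated ideal `J`. -/
def SRadFinite {R : Type*} [CommRing R] (S : Set R) (I : Ideal R) : Prop :=
  ∃ J : Ideal R, J.FG ∧ SRad S I = SRad S J

/-- For a ring homomorphism `φ : R → R'` with `0 ∉ φ(S)`: `φ(S)` is a multiplicatively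
closed subset of `R'`, and the induced map `φ_S : Spec_{φ(S)} R' → Spec_S R`,
`P' ↦ φ⁻¹(P')`, is continuous for the `φ(S)`-flat and `S`-flat topologies; indeed, for
every finitely generated ideal `I` of `R`, `φ_S⁻¹(V_S(I)) = V_{φ(S)}(φ(I)R')`. -/
theorem comap_continuous_sFlat {R R' : Type*} [CommRing R] [Nontrivial R] [CommRing R']
    [Nontrivial R'] (S : Set R)
    (hS0 : (0 : R) ∉ S) (hS1 : (1 : R) ∈ S) (hSmul : ∀ s ∈ S, ∀ t ∈ S, s * t ∈ S)
    (φ : R →+* R') (hφ : (0 : R') ∉ φ '' S) :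
    ((0 : R') ∉ φ '' S ∧ (1 : R') ∈ φ '' S ∧
        ∀ s ∈ φ '' S, ∀ t ∈ φ '' S, s * t ∈ φ '' S) ∧
      ∃ g : SSpec (φ '' S) → SSpec S,
        (∀ P' : SSpec (φ '' S), (g P').1 = Ideal.comap φ P'.1) ∧
        @Continuous (SSpec (φ '' S)) (SSpec S) (sFlatTop (φ '' S)) (sFlatTop S) g ∧
        ∀ I : Ideal R, I.FG →
          g ⁻¹' (SVar S I) = SVar (φ '' S) (Ideal.map φ I) := by
  have hg : ∀ P' : SSpec (φ '' S), IsSPrime S (Ideal.comap φ P'.1) := by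
    intro P'
    obtain ⟨hdisj, s', hs', hp⟩ := P'.2
    obtain ⟨s, hs, rfl⟩ := hs'
    refine ⟨?_, s, hs, ?_⟩
    · ext a
      simp only [Set.mem_inter_iff, Set.mem_empty_iff_false, iff_false, not_and]
      intro ha haS
      have : φ a ∈ (P'.1 : Set R') ∩ (φ '' S) := ⟨ha, ⟨a, haS, rfl⟩⟩
      rw [hdisj] at this
      exact this
    · intro a b hab
      have : φ a * φ b ∈ P'.1 := by rw [← map_mul]; exact hab
      rcases hp (φ a) (φ b) this with h | h
      · left; show φ (s * a) ∈ P'.1; rw [map_mul]; exact h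
      · right; show φ (s * b) ∈ P'.1; rw [map_mul]; exact h
  have key : ∀ I : Ideal R,
      (fun P' : SSpec (φ '' S) => (⟨Ideal.comap φ P'.1, hg P'⟩ : SSpec S)) ⁻¹' (SVar S I)
        = SVar (φ '' S) (Ideal.map φ I) := by
    intro I
    ext P'
    constructor
    · rintro ⟨s, hs, h⟩
      refine ⟨φ s, ⟨s, hs, rfl⟩, ?_⟩
      intro y hy
      have hle : Ideal.map φ I ≤ Submodule.colon P'.1 (Ideal.span {φ s}) := by
        rw [Ideal.map_le_iff_le_comap]
        intro x hx
        rw [Ideal.mem_comap, Ideal.mem_colon_span_singleton, ← map_mul, mul_comm]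
        exact h x hx
      rw [mul_comm]
      exact Ideal.mem_colon_span_singleton.mp (hle hy)
    · rintro ⟨_, ⟨s, hs, rfl⟩, h⟩
      refine ⟨s, hs, ?_⟩
      intro x hx
      show φ (s * x) ∈ P'.1
      rw [map_mul]
      exact h (φ x) (Ideal.mem_map_of_mem φ hx)
  refine ⟨⟨hφ, ⟨1, hS1, map_one φ⟩, ?_⟩,
    fun P' => ⟨Ideal.comap φ P'.1, hg P'⟩, fun P' => rfl, ?_, fun I _ => key I⟩
  · rintro _ ⟨s, hs, rfl⟩ _ ⟨t, ht, rfl⟩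
    exact ⟨s * t, hSmul s hs t ht, map_mul φ s t⟩
  · unfold sFlatTop
    refine continuous_generateFrom_iff.mpr ?_
    rintro _ ⟨f, rfl⟩
    erw [key]
    exact TopologicalSpace.GenerateOpen.basic _
      ⟨φ f, by rw [Ideal.map_span, Set.image_singleton]⟩
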